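/- arXiv:2306.14849 — 3 statements merged into one kernel-verified Lean document; each statement's English description precedes it below -/
import Mathlib

section
/- For all real s > 0, t > 0 and λ > 0, one has (λ^s / Γ(s)) · ∫₀^t b^{s−1} ν((t−b)λ) db = ν(tλ) − ∫₀^s (tλ)^r / Γ(r+1) dr. -/
open MeasureTheory Real

/-- The Volterra function `ν(x) = ∫₀^∞ x^s / Γ(s+1) ds` (for `x > 0`; `ν(0) = 0`). -/
noncomputable def volterra (x : ℝ) : ℝ := ∫ s in Set.Ioi (0 : ℝ), x ^ s / Real.Gamma (s + 1)

open Set Filter Nat Topology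


lemma volterra_integrand_integrableOn {x : ℝ} (hx : 0 ≤ x) :
    IntegrableOn (fun r : ℝ => x ^ r / Real.Gamma (r + 1)) (Set.Ioi (0:ℝ)) := by
  rcases hx.eq_or_lt with h0 | hx
  · apply (integrableOn_congr_fun (f := fun _ => (0:ℝ)) ?_ measurableSet_Ioi).mp
      (integrableOn_zero)
    intro r hr
    simp [← h0, Real.zero_rpow (ne_of_gt (mem_Ioi.mp hr))]
  · -- x > 0
    set M : ℝ := max x 1 with hM
    have hM1 : (1:ℝ) ≤ M := le_max_right _ _
    have hMx : x ≤ M := le_max_left _ _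
    have hMe : (0:ℝ) < M * Real.exp 1 := by positivity
    have htend : Tendsto (fun n : ℕ => (M * Real.exp 1) ^ (n+1) / (n ! : ℝ)) atTop (𝓝 0) := by
      have h := (FloorSemiring.tendsto_pow_div_factorial_atTop (M * Real.exp 1)).const_mul
        (M * Real.exp 1)
      rw [mul_zero] at h
      refine h.congr (fun n => ?_)
      rw [pow_succ]
      ring
    obtain ⟨N, hN⟩ := (htend.eventually_le_const (by norm_num : (0:ℝ) < 1)).exists_forall_of_atTop
    set a : ℝ := (N : ℝ) + 1 with ha
    have ha0 : (0:ℝ) ≤ a := by positivity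
    -- continuity on Ici 0
    have hcont : ContinuousOn (fun r : ℝ => x ^ r / Real.Gamma (r + 1)) (Ici (0:ℝ)) := by
      intro r hr
      apply ContinuousAt.continuousWithinAt
      have h1 : ContinuousAt (fun r : ℝ => x ^ r) r := by
        have : (fun r : ℝ => x ^ r) = fun r => Real.exp (Real.log x * r) := by
          funext u; rw [Real.rpow_def_of_pos hx]
        rw [this]
        exact (Real.continuous_exp.comp (continuous_const.mul continuous_id)).continuousAt
      have h2 : ContinuousAt (fun r : ℝ => Real.Gamma (r + 1)) r := by
        have h3 : ContinuousAt (fun u : ℝ => u + 1) r := by fun_prop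
        have := (Real.differentiableAt_Gamma (s := r + 1) ?_).continuousAt
        · exact ContinuousAt.comp (g := Real.Gamma) (f := fun u : ℝ => u + 1) (x := r) this h3
        · intro m
          have : (0:ℝ) < r + 1 := by simp at hr; linarith
          intro h; rw [h] at this
          have : (0:ℝ) ≤ (m:ℝ) := by positivity
          linarith
      exact h1.div h2 (Real.Gamma_pos_of_pos (by simp at hr; linarith)).ne'
    have hbound : ∀ r : ℝ, a ≤ r → x ^ r / Real.Gamma (r + 1) ≤ Real.exp (-r) := by
      intro r hr
      have hr0 : (0:ℝ) ≤ r := le_trans ha0 hr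
      set n : ℕ := ⌊r⌋₊ with hn
      have hnN : N ≤ n := Nat.le_floor (by push_cast; linarith)
      have h1 : (n:ℝ) ≤ r := Nat.floor_le hr0
      have h2 : r < (n:ℝ) + 1 := Nat.lt_floor_add_one r
      have hfac : (0:ℝ) < (n ! : ℝ) := by positivity
      have hΓ : (n ! : ℝ) ≤ Real.Gamma (r + 1) := by
        rw [← Real.Gamma_nat_eq_factorial]
        have hna : (1:ℝ) ≤ (n:ℝ) := by
          have h1r : (1:ℝ) ≤ r := le_trans (by push_cast; linarith) hr
          exact_mod_cast Nat.le_floor (by push_cast; linarith)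
        apply Real.Gamma_strictMonoOn_Ici.monotoneOn
        · simp [Set.mem_Ici]; push_cast; linarith
        · simp [Set.mem_Ici]; linarith
        · push_cast; linarith
      have hxr : x ^ r ≤ M ^ (n+1) := by
        calc x ^ r ≤ M ^ r := Real.rpow_le_rpow hx.le hMx hr0
        _ ≤ M ^ ((n:ℝ)+1) := Real.rpow_le_rpow_of_exponent_le hM1 (le_of_lt h2)
        _ = M ^ (n+1) := by rw [← Real.rpow_natCast M (n+1)]; push_cast; ring_nf
      have hkey : (M * Real.exp 1) ^ (n+1) / (n ! : ℝ) ≤ 1 := hN n hnN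
      have hMn : M ^ (n+1) ≤ (n ! : ℝ) * Real.exp (-((n:ℝ)+1)) := by
        rw [div_le_one hfac, mul_pow, Real.exp_one_pow] at hkey
        push_cast at hkey
        rw [Real.exp_neg, ← div_eq_mul_inv, le_div_iff₀ (Real.exp_pos _)]
        linarith
      calc x ^ r / Real.Gamma (r + 1) ≤ M ^ (n+1) / (n ! : ℝ) := by
            apply div_le_div₀ (by positivity) hxr hfac hΓ
        _ ≤ Real.exp (-((n:ℝ)+1)) := by rw [div_le_iff₀ hfac]; linarith [hMn]
        _ ≤ Real.exp (-r) := Real.exp_le_exp.mpr (by linarith)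
    have hIoi : IntegrableOn (fun r : ℝ => x ^ r / Real.Gamma (r + 1)) (Ioi a) := by
      apply integrable_of_isBigO_exp_neg (b := 1) one_pos (hcont.mono (Ici_subset_Ici.mpr ha0))
      rw [Asymptotics.isBigO_iff]
      refine ⟨1, eventually_atTop.mpr ⟨a, fun r hr => ?_⟩⟩
      have h0 : (0:ℝ) ≤ x ^ r / Real.Gamma (r + 1) := by
        have := Real.Gamma_pos_of_pos (show (0:ℝ) < r + 1 by nlinarith [ha0, hr])
        positivity
      rw [Real.norm_eq_abs, Real.norm_eq_abs, abs_of_nonneg h0, abs_of_nonneg (Real.exp_pos _).le,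
        one_mul, neg_one_mul]
      exact hbound r hr
    have hIoc : IntegrableOn (fun r : ℝ => x ^ r / Real.Gamma (r + 1)) (Ioc 0 a) := by
      exact ((hcont.mono (Icc_subset_Ici_self)).integrableOn_Icc).mono_set Ioc_subset_Icc_self
    have := hIoc.union hIoi
    rwa [Ioc_union_Ioi_eq_Ioi ha0] at this


lemma beta_aux {p q t : ℝ} (hp : 0 < p) (hq : 0 < q) (ht : 0 < t) :
    ∫ b in (0:ℝ)..t, b ^ (p-1) * (t-b) ^ (q-1)
      = t ^ (p+q-1) * (Real.Gamma p * Real.Gamma q / Real.Gamma (p+q)) := by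
  have h1 := Complex.betaIntegral_scaled (p : ℂ) (q : ℂ) ht
  have h2 := Complex.Gamma_mul_Gamma_eq_betaIntegral (s := (p:ℂ)) (t := (q:ℂ))
    (by simpa using hp) (by simpa using hq)
  have hΓ : Complex.Gamma ((p:ℂ) + q) ≠ 0 := by
    rw [← Complex.ofReal_add, Complex.Gamma_ofReal]
    exact_mod_cast (Real.Gamma_pos_of_pos (by linarith)).ne'
  have h3 : Complex.betaIntegral p q
      = Complex.Gamma p * Complex.Gamma q / Complex.Gamma ((p:ℂ)+q) := by
    field_simp [h2]
    rw [h2]; ring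
  have h4 : (∫ x in (0:ℝ)..t, (x:ℂ) ^ ((p:ℂ)-1) * ((t:ℂ)-(x:ℂ)) ^ ((q:ℂ)-1))
      = ((∫ b in (0:ℝ)..t, b ^ (p-1) * (t-b) ^ (q-1) : ℝ) : ℂ) := by
    rw [← intervalIntegral.integral_ofReal]
    apply intervalIntegral.integral_congr
    intro x hx
    rw [uIcc_of_le ht.le] at hx
    simp only []
    push_cast [Complex.ofReal_cpow hx.1, Complex.ofReal_cpow (sub_nonneg.mpr hx.2)]
    rfl
  rw [h4, h3] at h1
  have h5 : ((t:ℂ)) ^ ((p:ℂ) + q - 1) = ((t ^ (p+q-1) : ℝ) : ℂ) := by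
    rw [Complex.ofReal_cpow ht.le]
    push_cast
    ring_nf
  rw [h5] at h1
  have h6 : (Complex.Gamma p * Complex.Gamma q / Complex.Gamma ((p:ℂ)+q))
      = ((Real.Gamma p * Real.Gamma q / Real.Gamma (p+q) : ℝ) : ℂ) := by
    rw [← Complex.ofReal_add, Complex.Gamma_ofReal, Complex.Gamma_ofReal, Complex.Gamma_ofReal]
    push_cast
    ring
  rw [h6, ← Complex.ofReal_mul] at h1
  exact_mod_cast h1

lemma volterra_nonneg {x : ℝ} (hx : 0 ≤ x) : 0 ≤ volterra x := by
  apply setIntegral_nonneg measurableSet_Ioi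
  intro r hr
  have := Real.Gamma_pos_of_pos (show (0:ℝ) < r + 1 by have := mem_Ioi.mp hr; linarith)
  exact div_nonneg (Real.rpow_nonneg hx r) this.le

lemma volterra_mono {x y : ℝ} (hx : 0 ≤ x) (hxy : x ≤ y) : volterra x ≤ volterra y := by
  apply setIntegral_mono_on (volterra_integrand_integrableOn hx)
    (volterra_integrand_integrableOn (hx.trans hxy)) measurableSet_Ioi
  intro r hr
  have hr0 : (0:ℝ) < r := mem_Ioi.mp hr
  have hΓ := Real.Gamma_pos_of_pos (show (0:ℝ) < r + 1 by linarith)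
  have hxy' : x ^ r ≤ y ^ r := Real.rpow_le_rpow hx hxy hr0.le
  gcongr

/-- For all `s, t, λ > 0`:
`(λ^s / Γ(s)) · ∫₀^t b^{s−1} ν((t−b)λ) db = ν(tλ) − ∫₀^s (tλ)^r / Γ(r+1) dr`. -/
theorem volterra_fractional_integral (s t lam : ℝ) (hs : 0 < s) (ht : 0 < t) (hlam : 0 < lam) :
    (lam ^ s / Real.Gamma s) * (∫ b in (0 : ℝ)..t, b ^ (s - 1) * volterra ((t - b) * lam))
      = volterra (t * lam) - ∫ r in (0 : ℝ)..s, (t * lam) ^ r / Real.Gamma (r + 1) := by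
  have hX : 0 < t * lam := mul_pos ht hlam
  have hΓs : 0 < Real.Gamma s := Real.Gamma_pos_of_pos hs
  have hlams : (0:ℝ) < lam ^ s := Real.rpow_pos_of_pos hlam s
  set F : ℝ → ℝ → ℝ := fun b r => b ^ (s-1) * (((t - b) * lam) ^ r / Real.Gamma (r+1)) with hF
  set g : ℝ → ℝ := fun u => (t * lam) ^ u / Real.Gamma (u + 1) with hg
  have hint : IntegrableOn g (Ioi 0) := volterra_integrand_integrableOn hX.le
  -- pointwise: for b ∈ Ioc 0 t
  have key1 : ∀ b ∈ Set.Ioc (0:ℝ) t, b ^ (s-1) * volterra ((t-b)*lam) = ∫ r in Ioi (0:ℝ), F b r := by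
    intro b hb
    rw [volterra, ← integral_const_mul]
  -- integrability in r for each b
  have hInt_r : ∀ b ∈ Set.Ioc (0:ℝ) t, IntegrableOn (F b) (Ioi 0) := by
    intro b hb
    exact (volterra_integrand_integrableOn (x := (t-b)*lam)
      (by nlinarith [hb.2, hlam.le] : (0:ℝ) ≤ (t-b)*lam)).const_mul _
  -- continuity of F on the product set
  have hFcont : ContinuousOn (Function.uncurry F) ((Ioc (0:ℝ) t) ×ˢ (Ioi (0:ℝ))) := by
    rintro ⟨b, r⟩ ⟨hb, hr⟩
    apply ContinuousAt.continuousWithinAt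
    have hb0 : (0:ℝ) < b := hb.1
    have hr0 : (0:ℝ) < r := hr
    have h1 : ContinuousAt (fun p : ℝ × ℝ => p.1 ^ (s-1)) (b, r) := by
      exact ContinuousAt.comp (f := Prod.fst) (x := (b, r)) (Real.continuousAt_rpow_const b (s-1) (Or.inl hb0.ne')) continuousAt_fst
    have h2 : ContinuousAt (fun p : ℝ × ℝ => ((t - p.1) * lam) ^ p.2) (b, r) := by
      have hc : ContinuousAt (fun p : ℝ × ℝ => (((t - p.1) * lam), p.2)) (b, r) := by fun_prop
      exact ContinuousAt.comp (g := fun p : ℝ × ℝ => p.1 ^ p.2)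
        (f := fun p : ℝ × ℝ => ((t - p.1) * lam, p.2)) (x := (b, r))
        (Real.continuousAt_rpow _ (Or.inr hr0)) hc
    have h3 : ContinuousAt (fun p : ℝ × ℝ => Real.Gamma (p.2 + 1)) (b, r) := by
      have hG : ContinuousAt Real.Gamma (r + 1) := by
        refine (Real.differentiableAt_Gamma ?_).continuousAt
        intro m h
        have h0 : (0:ℝ) < r + 1 := by linarith
        have : (0:ℝ) ≤ (m:ℝ) := by positivity
        rw [h] at h0; linarith
      exact ContinuousAt.comp (g := Real.Gamma) (f := fun p : ℝ × ℝ => p.2 + 1)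
        (x := (b, r)) hG (by fun_prop)
    have hΓne : Real.Gamma (r + 1) ≠ 0 := (Real.Gamma_pos_of_pos (by linarith)).ne'
    exact h1.mul (h2.div h3 hΓne)
  -- product integrability
  have hprod : Integrable (Function.uncurry F)
      ((volume.restrict (Ioc (0:ℝ) t)).prod (volume.restrict (Ioi (0:ℝ)))) := by
    have hmeas : AEStronglyMeasurable (Function.uncurry F)
        ((volume.restrict (Ioc (0:ℝ) t)).prod (volume.restrict (Ioi (0:ℝ)))) := by
      rw [Measure.prod_restrict]
      exact hFcont.aestronglyMeasurable (measurableSet_Ioc.prod measurableSet_Ioi)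
    rw [integrable_prod_iff hmeas]
    constructor
    · refine (ae_restrict_iff' measurableSet_Ioc).mpr (ae_of_all _ ?_)
      intro b hb
      exact hInt_r b hb
    · -- Integrable (fun b => ∫ r, ‖F b r‖)
      have hb_eq : ∀ b ∈ Set.Ioc (0:ℝ) t,
          (∫ r in Ioi (0:ℝ), ‖F b r‖) = b ^ (s-1) * volterra ((t-b)*lam) := by
        intro b hb
        rw [key1 b hb]
        apply setIntegral_congr_fun measurableSet_Ioi
        intro r hr
        have hr0 : (0:ℝ) < r := hr
        have hΓ := Real.Gamma_pos_of_pos (show (0:ℝ) < r + 1 by linarith)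
        have hbt : (0:ℝ) ≤ (t - b) * lam := by nlinarith [hb.2, hlam.le]
        have h0 : (0:ℝ) ≤ F b r := by
          have : (0:ℝ) ≤ b ^ (s-1) := (Real.rpow_pos_of_pos hb.1 _).le
          have : (0:ℝ) ≤ ((t-b)*lam) ^ r := Real.rpow_nonneg hbt r
          positivity
        simp [Real.norm_eq_abs, abs_of_nonneg h0]
      refine (Integrable.mono (g := fun b => b ^ (s-1) * volterra (t * lam)) ?_ ?_ ?_)
      · have h1 : IntegrableOn (fun b : ℝ => b ^ (s-1)) (Ioc 0 t) := by
          have := (intervalIntegral.intervalIntegrable_rpow' (a := 0) (b := t)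
            (show (-1:ℝ) < s - 1 by linarith))
          rwa [intervalIntegrable_iff_integrableOn_Ioc_of_le ht.le] at this
        exact h1.mul_const _
      · exact (hmeas.norm.integral_prod_right')
      · refine (ae_restrict_iff' measurableSet_Ioc).mpr (ae_of_all _ ?_)
        intro b hb
        have hbt : (0:ℝ) ≤ (t - b) * lam := by nlinarith [hb.2, hlam.le]
        have hmono : volterra ((t-b)*lam) ≤ volterra (t*lam) :=
          volterra_mono hbt (by nlinarith [hb.1, hlam.le])
        have hbp : (0:ℝ) ≤ b ^ (s-1) := (Real.rpow_pos_of_pos hb.1 _).le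
        simp only [Function.uncurry_apply_pair]
        rw [Real.norm_eq_abs, Real.norm_eq_abs, hb_eq b hb,
          abs_of_nonneg (mul_nonneg hbp (volterra_nonneg hX.le)),
          abs_of_nonneg (mul_nonneg hbp (volterra_nonneg (by nlinarith [hb.2, hlam.le] : (0:ℝ) ≤ (t-b)*lam)))]
        exact mul_le_mul_of_nonneg_left hmono hbp
  -- inner b-integral computation
  have key2 : ∀ r ∈ Ioi (0:ℝ), (∫ b in Ioc (0:ℝ) t, F b r)
      = (Real.Gamma s / lam ^ s) * ((t*lam) ^ (s + r) / Real.Gamma (s + r + 1)) := by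
    intro r hr
    have hr0 : (0:ℝ) < r := hr
    have hΓr := Real.Gamma_pos_of_pos (show (0:ℝ) < r + 1 by linarith)
    have hΓsr := Real.Gamma_pos_of_pos (show (0:ℝ) < s + r + 1 by linarith)
    rw [← intervalIntegral.integral_of_le ht.le]
    have hcongr : ∀ b ∈ uIcc (0:ℝ) t,
        F b r = (lam ^ r / Real.Gamma (r+1)) * (b ^ (s-1) * (t-b) ^ ((r+1)-1)) := by
      intro b hb
      rw [uIcc_of_le ht.le] at hb
      have h1 : ((t-b)*lam) ^ r = (t-b) ^ r * lam ^ r :=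
        Real.mul_rpow (by linarith [hb.2]) hlam.le
      simp only [hF]
      rw [h1]
      ring_nf
    rw [intervalIntegral.integral_congr hcongr, intervalIntegral.integral_const_mul,
      beta_aux hs (by linarith : (0:ℝ) < r + 1) ht]
    have e1 : s + (r+1) - 1 = s + r := by ring
    have e2 : s + (r+1) = s + r + 1 := by ring
    rw [e1, e2]
    have h2 : (t*lam) ^ (s+r) = t ^ (s+r) * lam ^ (s+r) := Real.mul_rpow ht.le hlam.le
    have h3 : lam ^ (s+r) = lam ^ s * lam ^ r := Real.rpow_add hlam s r
    rw [h2, h3]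
    field_simp
  -- translation
  have key3 : (∫ r in Ioi (0:ℝ), (t*lam) ^ (s + r) / Real.Gamma (s + r + 1))
      = ∫ u in Ioi s, g u := by
    have e0 : (∫ r in Ioi (0:ℝ), (t*lam) ^ (s + r) / Real.Gamma (s + r + 1))
        = ∫ r in Ioi (0:ℝ), g (r + s) := by
      apply setIntegral_congr_fun measurableSet_Ioi
      intro r _
      simp only [hg]
      rw [add_comm s r, add_assoc]
    rw [e0, ← integral_indicator measurableSet_Ioi,
      ← integral_indicator (measurableSet_Ioi (a := s))]
    have e1 : ∀ r : ℝ, (Ioi (0:ℝ)).indicator (fun r => g (r + s)) r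
        = (Ioi s).indicator g (r + s) := by
      intro r
      by_cases h : 0 < r
      · rw [indicator_of_mem (mem_Ioi.mpr h), indicator_of_mem (by simp [mem_Ioi]; linarith)]
      · rw [indicator_of_notMem (by simpa using h),
          indicator_of_notMem (by simp only [mem_Ioi, not_lt]; linarith [not_lt.mp h])]
    rw [funext e1]
    exact integral_add_right_eq_self ((Ioi s).indicator g) s
  -- splitting
  have key4 : volterra (t*lam)
      = (∫ u in Ioc (0:ℝ) s, g u) + ∫ u in Ioi s, g u := by
    rw [show volterra (t*lam) = ∫ u in Ioi (0:ℝ), g u from rfl]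
    rw [← setIntegral_union (Ioc_disjoint_Ioi le_rfl) measurableSet_Ioi
      (hint.mono_set Ioc_subset_Ioi_self) (hint.mono_set (Ioi_subset_Ioi hs.le)),
      Ioc_union_Ioi_eq_Ioi hs.le]
  -- assemble
  rw [intervalIntegral.integral_of_le ht.le,
    setIntegral_congr_fun measurableSet_Ioc key1,
    integral_integral_swap hprod,
    setIntegral_congr_fun measurableSet_Ioi key2,
    integral_const_mul, key3]
  rw [intervalIntegral.integral_of_le hs.le]
  have : (∫ r in Ioc (0:ℝ) s, (t * lam) ^ r / Real.Gamma (r + 1)) = ∫ u in Ioc (0:ℝ) s, g u := rfl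
  rw [this, key4]
  field_simp
  ring
end

section
/- For all real β > 0 and β′ > 0, one has ∫₀^1 (ν((1−θ)β′) · ν(β) − ν(β′) · ν((1−θ)β)) · (1/θ) dθ = log(β/β′) · ν(β′) · ν(β) + ν(β′) − ν(β). -/
open MeasureTheory Real

open Filter Set

lemma gamma_add_one_pos {s : ℝ} (hs : 0 ≤ s) : 0 < Real.Gamma (s + 1) :=
  Real.Gamma_pos_of_pos (by linarith)

lemma tend0 {c : ℝ} (hc : 0 < c) :
    Tendsto (fun s : ℝ ↦ c ^ s / Real.Gamma (s + 1)) atTop (nhds 0) := by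
  set M : ℝ := max c 1 with hMdef
  have hM1 : (1:ℝ) ≤ M := le_max_right _ _
  have hM0 : (0:ℝ) < M := lt_of_lt_of_le one_pos hM1
  have key : Tendsto (fun n : ℕ ↦ M * (M ^ n / n.factorial)) atTop (nhds 0) := by
    simpa using (FloorSemiring.tendsto_pow_div_factorial_atTop (K := ℝ) M).const_mul M
  have key2 : Tendsto (fun s : ℝ ↦ M * (M ^ ⌊s⌋₊ / ⌊s⌋₊.factorial)) atTop (nhds 0) :=
    key.comp tendsto_nat_floor_atTop
  apply tendsto_of_tendsto_of_tendsto_of_le_of_le' tendsto_const_nhds key2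
  · filter_upwards [eventually_ge_atTop (2:ℝ)] with s hs
    positivity
  · filter_upwards [eventually_ge_atTop (2:ℝ)] with s hs
    have hs0 : (0:ℝ) ≤ s := by linarith
    have hfl : (2:ℕ) ≤ ⌊s⌋₊ := Nat.le_floor (by exact_mod_cast hs)
    have hfl' : (⌊s⌋₊ : ℝ) ≤ s := Nat.floor_le hs0
    have h1 : c ^ s ≤ M ^ (⌊s⌋₊ + 1 : ℕ) := by
      calc c ^ s ≤ M ^ s := Real.rpow_le_rpow hc.le (le_max_left _ _) hs0
      _ ≤ M ^ ((⌊s⌋₊ + 1 : ℕ) : ℝ) := by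
          apply Real.rpow_le_rpow_of_exponent_le hM1
          push_cast
          exact (Nat.lt_floor_add_one s).le
      _ = M ^ (⌊s⌋₊ + 1 : ℕ) := Real.rpow_natCast _ _
    have h2 : (⌊s⌋₊.factorial : ℝ) ≤ Real.Gamma (s + 1) := by
      rw [← Real.Gamma_nat_eq_factorial]
      apply (Real.Gamma_strictMonoOn_Ici.monotoneOn)
      · simp only [mem_Ici]; push_cast; have : (2:ℝ) ≤ ⌊s⌋₊ := by exact_mod_cast hfl
        linarith
      · simp only [mem_Ici]; linarith
      · push_cast; linarith
    have hG : (0:ℝ) < Real.Gamma (s + 1) := gamma_add_one_pos hs0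
    have hfac : (0:ℝ) < (⌊s⌋₊.factorial : ℝ) := by positivity
    calc c ^ s / Real.Gamma (s + 1) ≤ M ^ (⌊s⌋₊ + 1 : ℕ) / (⌊s⌋₊.factorial : ℝ) :=
          div_le_div₀ (by positivity) h1 hfac h2
    _ = M * (M ^ ⌊s⌋₊ / ⌊s⌋₊.factorial) := by rw [pow_succ]; ring

lemma tend1 {c : ℝ} (hc : 0 < c) :
    Tendsto (fun s : ℝ ↦ (1 + s) * (c ^ s / Real.Gamma (s + 1))) atTop (nhds 0) := by
  have h := tend0 (mul_pos (Real.exp_pos 1) hc)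
  apply tendsto_of_tendsto_of_tendsto_of_le_of_le' tendsto_const_nhds h
  · filter_upwards [eventually_ge_atTop (0:ℝ)] with s hs
    have := gamma_add_one_pos hs
    positivity
  · filter_upwards [eventually_ge_atTop (0:ℝ)] with s hs
    have hG := gamma_add_one_pos hs
    have h1 : (1 + s) ≤ Real.exp s := by
      have := Real.add_one_le_exp s; linarith
    have h2 : (Real.exp 1 * c) ^ s = Real.exp s * c ^ s := by
      rw [Real.mul_rpow (Real.exp_pos 1).le hc.le, Real.exp_one_rpow]
    rw [h2, mul_div_assoc]
    apply mul_le_mul_of_nonneg_right h1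
    positivity

lemma contOn_base {x : ℝ} (hx : 0 < x) :
    ContinuousOn (fun s : ℝ ↦ x ^ s / Real.Gamma (s + 1)) (Ici 0) := by
  apply ContinuousOn.div
  · apply Continuous.continuousOn
    exact (Real.continuous_exp.comp (continuous_const.mul continuous_id)).congr
      (fun s ↦ (Real.rpow_def_of_pos hx s).symm)
  · intro s hs
    have hs0 : (0:ℝ) ≤ s := hs
    have hne : ∀ m : ℕ, s + 1 ≠ -(m:ℝ) := by
      intro m h
      have : (0:ℝ) ≤ (m:ℝ) := m.cast_nonneg
      linarith
    have hc : ContinuousAt (fun t : ℝ ↦ Real.Gamma (t + 1)) s :=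
      ContinuousAt.comp (f := fun t : ℝ ↦ t + 1) (g := Real.Gamma)
        ((Real.differentiableAt_Gamma hne).continuousAt) (by fun_prop)
    exact hc.continuousWithinAt
  · intro s hs
    exact (gamma_add_one_pos hs).ne'

lemma integrable_one_add {x : ℝ} (hx : 0 < x) :
    IntegrableOn (fun s : ℝ ↦ (1 + s) * (x ^ s / Real.Gamma (s + 1))) (Ioi 0) := by
  apply integrable_of_isBigO_exp_neg (one_pos) (by
    exact (continuous_const.add continuous_id).continuousOn.mul (contOn_base hx))
  have h := tend1 (mul_pos (Real.exp_pos 1) hx)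
  have hb : (fun s : ℝ ↦ (1 + s) * ((Real.exp 1 * x) ^ s / Real.Gamma (s + 1)))
      =O[atTop] (fun _ : ℝ ↦ (1:ℝ)) := h.isBigO_one ℝ
  have hthis := hb.mul (Asymptotics.isBigO_refl (fun s : ℝ ↦ Real.exp (-s)) atTop)
  simp only [one_mul] at hthis
  have heq : (fun s : ℝ ↦ (1 + s) * ((Real.exp 1 * x) ^ s / Real.Gamma (s + 1)) * Real.exp (-s))
      = fun s : ℝ ↦ (1 + s) * (x ^ s / Real.Gamma (s + 1)) := by
    funext s
    rw [Real.mul_rpow (Real.exp_pos 1).le hx.le, Real.exp_one_rpow]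
    have key : Real.exp s * Real.exp (-s) = 1 := by
      rw [← Real.exp_add, add_neg_cancel, Real.exp_zero]
    calc (1 + s) * (Real.exp s * x ^ s / Real.Gamma (s + 1)) * Real.exp (-s)
        = (1 + s) * (x ^ s / Real.Gamma (s + 1)) * (Real.exp s * Real.exp (-s)) := by ring
      _ = (1 + s) * (x ^ s / Real.Gamma (s + 1)) := by rw [key, mul_one]
  have heq2 : (fun s : ℝ ↦ Real.exp (-1 * s)) = fun s : ℝ ↦ Real.exp (-s) := by
    funext s; rw [neg_one_mul]
  rw [heq2, ← heq]
  exact hthis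

lemma integrable_base {x : ℝ} (hx : 0 < x) :
    IntegrableOn (fun s : ℝ ↦ x ^ s / Real.Gamma (s + 1)) (Ioi 0) := by
  apply MeasureTheory.Integrable.mono (integrable_one_add hx)
  · exact ((contOn_base hx).mono Ioi_subset_Ici_self).aestronglyMeasurable measurableSet_Ioi
  · filter_upwards [ae_restrict_mem measurableSet_Ioi] with s hs
    have hs0 : (0:ℝ) ≤ s := le_of_lt hs
    have hG := gamma_add_one_pos hs0
    have hpos : (0:ℝ) ≤ x ^ s / Real.Gamma (s + 1) := by positivity
    rw [Real.norm_eq_abs, Real.norm_eq_abs, abs_of_nonneg hpos,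
      abs_of_nonneg (by nlinarith : (0:ℝ) ≤ (1 + s) * (x ^ s / Real.Gamma (s + 1)))]
    nlinarith

lemma integrableOn_of_bounded' {f : ℝ → ℝ} {s : Set ℝ} (hs : MeasurableSet s)
    (hμ : volume s ≠ ⊤) (hf : AEStronglyMeasurable f (volume.restrict s)) {M : ℝ}
    (bdd : ∀ x ∈ s, ‖f x‖ ≤ M) : IntegrableOn f s :=
  ⟨hf, HasFiniteIntegral.restrict_of_bounded M hμ.lt_top
    (by filter_upwards [ae_restrict_mem hs] using bdd)⟩

noncomputable def Hfun (s : ℝ) : ℝ := ∫ u in Set.Ioo (0:ℝ) 1, (1 - u ^ s) / (1 - u)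

lemma H_integrand_bounds {s u : ℝ} (hs : 0 ≤ s) (hu : u ∈ Ioo (0:ℝ) 1) :
    0 ≤ (1 - u ^ s) / (1 - u) ∧ (1 - u ^ s) / (1 - u) ≤ 1 + s := by
  obtain ⟨hu0, hu1⟩ := hu
  have h1u : 0 < 1 - u := by linarith
  have hus1 : u ^ s ≤ 1 := Real.rpow_le_one hu0.le hu1.le hs
  have hkey : 1 - u ^ s ≤ (1 + s) * (1 - u) := by
    rcases le_or_gt 1 s with h | h
    · have hb := one_add_mul_self_le_rpow_one_add (by linarith : (-1:ℝ) ≤ u - 1) h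
      rw [add_sub_cancel] at hb
      nlinarith
    · have h2 : u ^ (1:ℝ) ≤ u ^ s := Real.rpow_le_rpow_of_exponent_ge hu0 hu1.le h.le
      rw [Real.rpow_one] at h2
      nlinarith
  constructor
  · apply div_nonneg (by linarith) h1u.le
  · rw [div_le_iff₀ h1u]
    linarith [hkey]

lemma H_integrand_contOn {s : ℝ} :
    ContinuousOn (fun u : ℝ ↦ (1 - u ^ s) / (1 - u)) (Ioo 0 1) := by
  apply ContinuousOn.div
  · apply ContinuousOn.sub continuousOn_const
    intro u hu
    exact (Real.continuousAt_rpow_const u s (Or.inl hu.1.ne')).continuousWithinAt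
  · fun_prop
  · intro u hu
    have := hu.2
    intro h; simp only [sub_eq_zero] at h; rw [← h] at this; exact lt_irrefl _ this

lemma H_integrableOn {s : ℝ} (hs : 0 ≤ s) :
    IntegrableOn (fun u : ℝ ↦ (1 - u ^ s) / (1 - u)) (Ioo 0 1) := by
  apply integrableOn_of_bounded' measurableSet_Ioo (by simp)
    (H_integrand_contOn.aestronglyMeasurable measurableSet_Ioo) (M := 1 + s)
  intro u hu
  rw [Real.norm_eq_abs, abs_of_nonneg (H_integrand_bounds hs hu).1]
  exact (H_integrand_bounds hs hu).2

lemma Hfun_nonneg {s : ℝ} (hs : 0 ≤ s) : 0 ≤ Hfun s :=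
  setIntegral_nonneg measurableSet_Ioo (fun u hu ↦ (H_integrand_bounds hs hu).1)

lemma Hfun_le {s : ℝ} (hs : 0 ≤ s) : Hfun s ≤ 1 + s := by
  have : Hfun s ≤ ∫ _u in Set.Ioo (0:ℝ) 1, (1 + s) := by
    apply setIntegral_mono_on (H_integrableOn hs) (integrableOn_const (by simp) (by simp))
      measurableSet_Ioo
    exact fun u hu ↦ (H_integrand_bounds hs hu).2
  simpa using this

lemma Hfun_mono {s t : ℝ} (hs : 0 ≤ s) (hst : s ≤ t) : Hfun s ≤ Hfun t := by
  apply setIntegral_mono_on (H_integrableOn hs) (H_integrableOn (hs.trans hst))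
    measurableSet_Ioo
  intro u hu
  have h2 : u ^ t ≤ u ^ s := Real.rpow_le_rpow_of_exponent_ge hu.1 hu.2.le hst
  have h1u : 0 < 1 - u := by linarith [hu.2]
  rw [div_le_div_iff₀ h1u h1u]
  nlinarith

lemma integrableOn_rpow_Ioo {s : ℝ} (hs : 0 ≤ s) :
    IntegrableOn (fun u : ℝ ↦ u ^ s) (Ioo 0 1) := by
  apply integrableOn_of_bounded' measurableSet_Ioo (by simp) ?_ (M := 1)
  · intro u hu
    rw [Real.norm_eq_abs, abs_of_nonneg (Real.rpow_nonneg hu.1.le s)]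
    exact Real.rpow_le_one hu.1.le hu.2.le hs
  · apply ContinuousOn.aestronglyMeasurable ?_ measurableSet_Ioo
    intro u hu
    exact (Real.continuousAt_rpow_const u s (Or.inl hu.1.ne')).continuousWithinAt

lemma integral_rpow_Ioo {s : ℝ} (hs : 0 ≤ s) :
    ∫ u in Set.Ioo (0:ℝ) 1, u ^ s = 1 / (s + 1) := by
  rw [← integral_Ioc_eq_integral_Ioo, ← intervalIntegral.integral_of_le one_pos.le,
    integral_rpow (Or.inl (by linarith))]
  rw [Real.one_rpow, Real.zero_rpow (by linarith : s + 1 ≠ 0)]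
  norm_num

lemma Hfun_rec {s : ℝ} (hs : 0 ≤ s) : Hfun (s + 1) = Hfun s + 1 / (s + 1) := by
  have key : ∀ u ∈ Ioo (0:ℝ) 1, (1 - u ^ (s+1)) / (1 - u) = (1 - u ^ s) / (1 - u) + u ^ s := by
    intro u hu
    have hu0 := hu.1
    have h1u : (1:ℝ) - u ≠ 0 := by have := hu.2; intro h; rw [sub_eq_zero] at h; linarith
    have hpow : u ^ (s + 1) = u ^ s * u := by rw [Real.rpow_add hu.1, Real.rpow_one]
    field_simp [hpow]
    rw [hpow]
    ring
  have heq : Hfun (s + 1) = ∫ u in Set.Ioo (0:ℝ) 1, ((1 - u ^ s) / (1 - u) + u ^ s) := by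
    rw [Hfun]; exact setIntegral_congr_fun measurableSet_Ioo key
  rw [heq, integral_add (H_integrableOn hs) (integrableOn_rpow_Ioo hs), integral_rpow_Ioo hs]
  rfl

lemma Hfun_zero : Hfun 0 = 0 := by
  have : ∀ u ∈ Ioo (0:ℝ) 1, (1 - u ^ (0:ℝ)) / (1 - u) = 0 := by
    intro u hu
    rw [Real.rpow_zero, sub_self, zero_div]
  rw [Hfun, setIntegral_congr_fun measurableSet_Ioo this, integral_zero]

lemma Hfun_nat (n : ℕ) : Hfun n = harmonic n := by
  induction n with
  | zero => simp [Hfun_zero]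
  | succ n ih =>
      have : ((n:ℝ) + 1) = ((n+1 : ℕ) : ℝ) := by push_cast; ring
      rw [show ((n+1 : ℕ) : ℝ) = (n:ℝ) + 1 by push_cast; ring, Hfun_rec n.cast_nonneg, ih,
        harmonic_succ]
      push_cast
      ring

noncomputable def psi (s : ℝ) : ℝ := deriv Real.Gamma s / Real.Gamma s

lemma Gamma_ne_neg_nat {s : ℝ} (hs : 0 < s) : ∀ m : ℕ, s ≠ -(m:ℝ) := by
  intro m h
  have : (0:ℝ) ≤ (m:ℝ) := m.cast_nonneg
  linarith

lemma hasDerivAt_Gamma' {s : ℝ} (hs : 0 < s) :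
    HasDerivAt Real.Gamma (deriv Real.Gamma s) s :=
  (Real.differentiableAt_Gamma (Gamma_ne_neg_nat hs)).hasDerivAt

lemma psi_rec {s : ℝ} (hs : 0 < s) : psi (s + 1) = psi s + 1 / s := by
  have hG : 0 < Real.Gamma s := Real.Gamma_pos_of_pos hs
  have h1 : HasDerivAt (fun t : ℝ ↦ Real.Gamma (t + 1)) (deriv Real.Gamma (s + 1)) s := by
    simpa [Function.comp_def] using (hasDerivAt_Gamma' (by linarith : (0:ℝ) < s + 1)).comp s
      ((hasDerivAt_id s).add_const 1)
  have h2 : HasDerivAt (fun t : ℝ ↦ t * Real.Gamma t)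
      (1 * Real.Gamma s + s * deriv Real.Gamma s) s :=
    (hasDerivAt_id s).mul (hasDerivAt_Gamma' hs)
  have heq : (fun t : ℝ ↦ Real.Gamma (t + 1)) =ᶠ[nhds s] fun t : ℝ ↦ t * Real.Gamma t := by
    filter_upwards [eventually_gt_nhds hs] with t ht
    exact Real.Gamma_add_one ht.ne'
  have h1' : HasDerivAt (fun t : ℝ ↦ Real.Gamma (t + 1))
      (1 * Real.Gamma s + s * deriv Real.Gamma s) s := h2.congr_of_eventuallyEq heq
  have hder : deriv Real.Gamma (s + 1) = Real.Gamma s + s * deriv Real.Gamma s := by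
    have := h1.unique h1'
    linarith [this]
  rw [psi, psi, hder, Real.Gamma_add_one hs.ne']
  field_simp
  ring

lemma psi_one : psi 1 = -Real.eulerMascheroniConstant := by
  rw [psi, Real.hasDerivAt_Gamma_one.deriv, Real.Gamma_one, div_one]

lemma deriv_logGamma {y : ℝ} (hy : 0 < y) :
    deriv (Real.log ∘ Real.Gamma) y = psi y := by
  rw [Function.comp_def, deriv.log (Real.differentiableAt_Gamma (Gamma_ne_neg_nat hy))
    (Real.Gamma_pos_of_pos hy).ne', psi]

lemma diff_logGamma {y : ℝ} (hy : 0 < y) :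
    DifferentiableAt ℝ (Real.log ∘ Real.Gamma) y :=
  (Real.differentiableAt_Gamma (Gamma_ne_neg_nat hy)).log (Real.Gamma_pos_of_pos hy).ne'

lemma logGamma_rec {y : ℝ} (hy : 0 < y) :
    (Real.log ∘ Real.Gamma) (y + 1) = (Real.log ∘ Real.Gamma) y + Real.log y := by
  simp only [Function.comp_apply, Real.Gamma_add_one hy.ne',
    Real.log_mul hy.ne' (Real.Gamma_pos_of_pos hy).ne']
  ring

lemma psi_lb {x : ℝ} (hx : 0 < x) : Real.log x ≤ psi (x + 1) := by
  rw [← deriv_logGamma (by linarith)]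
  refine (le_of_eq ?_).trans <| (Real.convexOn_log_Gamma).slope_le_deriv (mem_Ioi.mpr hx)
    (mem_Ioi.mpr (by linarith)) (by linarith) (diff_logGamma (by linarith))
  rw [slope_def_field, show x + 1 - x = (1:ℝ) by ring, div_one, logGamma_rec hx,
    add_sub_cancel_left]

lemma psi_ub {x : ℝ} (hx : 0 < x) : psi (x + 1) ≤ Real.log (x + 1) := by
  rw [← deriv_logGamma (by linarith)]
  refine ((Real.convexOn_log_Gamma).deriv_le_slope (mem_Ioi.mpr (by linarith : (0:ℝ) < x + 1))
    (mem_Ioi.mpr (by linarith : (0:ℝ) < x + 2)) (by linarith)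
    (diff_logGamma (by linarith))).trans (le_of_eq ?_)
  rw [slope_def_field, show x + 2 - (x + 1) = (1:ℝ) by ring, div_one,
    show x + 2 = (x + 1) + 1 by ring, logGamma_rec (by linarith : (0:ℝ) < x + 1),
    add_sub_cancel_left]

lemma psi_eq_Hfun {s : ℝ} (hs : 0 < s) :
    psi (s + 1) = Hfun s - Real.eulerMascheroniConstant := by
  set γ := Real.eulerMascheroniConstant
  -- the quantity is constant along n ↦ s + n
  have hconst : ∀ n : ℕ, psi (s + 1) - Hfun s = psi (s + n + 1) - Hfun (s + n) := by
    intro n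
    induction n with
    | zero => simp
    | succ n ih =>
        have h1 : psi (s + (n + 1) + 1) = psi (s + n + 1) + 1 / (s + n + 1) := by
          have := psi_rec (show (0:ℝ) < s + n + 1 by positivity)
          have e1 : s + (n + 1) + 1 = (s + (n:ℝ) + 1) + 1 := by push_cast; ring
          rw [e1, this]
        have h2 : Hfun (s + (n + 1)) = Hfun (s + n) + 1 / (s + n + 1) := by
          have := Hfun_rec (show (0:ℝ) ≤ s + n by positivity)
          have e1 : s + ((n:ℝ) + 1) = (s + (n:ℝ)) + 1 := by ring
          rw [e1, this]
        push_cast at h1 h2 ⊢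
        rw [h1, h2]
        linarith [ih]
  set m := ⌈s⌉₊ with hm
  have hsm : s ≤ (m:ℝ) := Nat.le_ceil s
  -- lower bound sequence
  have hLB : ∀ n : ℕ, 1 ≤ n →
      Real.log n - (harmonic (n + m) : ℝ) ≤ psi (s + 1) - Hfun s := by
    intro n hn
    rw [hconst n]
    have hn0 : (0:ℝ) < n := by exact_mod_cast hn
    have h1 : Real.log n ≤ psi (s + n + 1) := by
      refine (Real.log_le_log hn0 (show (n:ℝ) ≤ s + n by linarith)).trans ?_
      exact psi_lb (by positivity)
    have h2 : Hfun (s + n) ≤ (harmonic (n + m) : ℝ) := by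
      have : Hfun (s + n) ≤ Hfun ((n + m : ℕ) : ℝ) := by
        apply Hfun_mono (by positivity)
        push_cast
        linarith
      rw [Hfun_nat] at this
      exact this
    linarith
  -- upper bound sequence
  have hUB : ∀ n : ℕ,
      psi (s + 1) - Hfun s ≤ Real.log ((n + m : ℕ) + 1) - (harmonic n : ℝ) := by
    intro n
    rw [hconst n]
    have h1 : psi (s + n + 1) ≤ Real.log ((n + m : ℕ) + 1) := by
      refine (psi_ub (by positivity : (0:ℝ) < s + n)).trans ?_
      apply Real.log_le_log (by positivity)
      push_cast
      linarith
    have h2 : (harmonic n : ℝ) ≤ Hfun (s + n) := by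
      have : Hfun ((n : ℕ) : ℝ) ≤ Hfun (s + n) := by
        apply Hfun_mono n.cast_nonneg
        linarith
      rwa [Hfun_nat] at this
    linarith
  -- limit computations
  have hlogc : ∀ c : ℝ, 0 ≤ c →
      Tendsto (fun n : ℕ ↦ Real.log ((n:ℝ) + c) - Real.log n) atTop (nhds 0) := by
    intro c hc
    have h1 : Tendsto (fun n : ℕ ↦ 1 + c * (1 / (n:ℝ))) atTop (nhds (1 + c * 0)) :=
      tendsto_const_nhds.add (tendsto_const_nhds.mul tendsto_one_div_atTop_nhds_zero_nat)
    rw [mul_zero, add_zero] at h1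
    have h3 := (Real.continuousAt_log one_ne_zero).tendsto.comp h1
    rw [Real.log_one] at h3
    apply h3.congr'
    filter_upwards [eventually_ge_atTop 1] with n hn
    have hn0 : (0:ℝ) < n := by exact_mod_cast hn
    simp only [Function.comp_apply]
    rw [show 1 + c * (1 / (n:ℝ)) = ((n:ℝ) + c) / n by field_simp,
      Real.log_div (by positivity : (0:ℝ) < (n:ℝ) + c).ne' hn0.ne']
  have hharm : Tendsto (fun n : ℕ ↦ (harmonic (n + m) : ℝ) - Real.log ((n:ℝ) + (m:ℝ)))
      atTop (nhds γ) := by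
    have h := Real.tendsto_harmonic_sub_log.comp (tendsto_add_atTop_nat m)
    apply h.congr
    intro n
    simp only [Function.comp_apply]
    push_cast
    rfl
  have hLBlim : Tendsto (fun n : ℕ ↦ Real.log n - (harmonic (n + m) : ℝ))
      atTop (nhds (-γ)) := by
    have key := (hharm.neg).sub (hlogc (m:ℝ) m.cast_nonneg)
    rw [sub_zero] at key
    apply key.congr
    intro n
    ring
  have hUBlim : Tendsto (fun n : ℕ ↦ Real.log (((n + m : ℕ) : ℝ) + 1) - (harmonic n : ℝ))
      atTop (nhds (-γ)) := by
    have key := (hlogc ((m:ℝ) + 1) (by positivity)).sub Real.tendsto_harmonic_sub_log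
    rw [zero_sub] at key
    apply key.congr
    intro n
    push_cast
    ring
  have hge : -γ ≤ psi (s + 1) - Hfun s := by
    apply le_of_tendsto hLBlim
    filter_upwards [eventually_ge_atTop 1] with n hn
    exact hLB n hn
  have hle : psi (s + 1) - Hfun s ≤ -γ := by
    apply ge_of_tendsto hUBlim
    filter_upwards with n
    exact hUB n
  have : psi (s + 1) - Hfun s = -γ := le_antisymm hle hge
  linarith

section FTC
variable {x : ℝ}

lemma hasDerivAt_W (hx : 0 < x) {s : ℝ} (hs : 0 ≤ s) :
    HasDerivAt (fun t : ℝ ↦ x ^ t / Real.Gamma (t + 1))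
      ((Real.log x - psi (s + 1)) * (x ^ s / Real.Gamma (s + 1))) s := by
  have hG : 0 < Real.Gamma (s + 1) := gamma_add_one_pos hs
  have h1 : HasDerivAt (fun t : ℝ ↦ x ^ t) (x ^ s * Real.log x) s :=
    (Real.hasStrictDerivAt_const_rpow hx s).hasDerivAt
  have h2 : HasDerivAt (fun t : ℝ ↦ Real.Gamma (t + 1)) (deriv Real.Gamma (s + 1)) s := by
    simpa [Function.comp_def] using (hasDerivAt_Gamma' (by linarith : (0:ℝ) < s + 1)).comp s
      ((hasDerivAt_id s).add_const 1)
  have h3 := h1.div h2 hG.ne'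
  refine (h3 : HasDerivAt (fun t : ℝ ↦ x ^ t / Real.Gamma (t + 1)) _ s).congr_deriv ?_
  rw [psi]
  field_simp

lemma integrable_W' (hx : 0 < x) :
    IntegrableOn (fun s : ℝ ↦ (Real.log x - psi (s + 1)) * (x ^ s / Real.Gamma (s + 1)))
      (Ioi 0) := by
  set γ := Real.eulerMascheroniConstant
  set K : ℝ := 1 + |Real.log x| + |γ| with hK
  apply MeasureTheory.Integrable.mono ((integrable_one_add hx).const_mul K)
  · -- measurability
    have hmW : AEStronglyMeasurable (fun s : ℝ ↦ x ^ s / Real.Gamma (s + 1))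
        (volume.restrict (Ioi 0)) :=
      ((contOn_base hx).mono Ioi_subset_Ici_self).aestronglyMeasurable measurableSet_Ioi
    have hmd : Measurable (fun s : ℝ ↦ Real.log x - deriv (Real.log ∘ Real.Gamma) (s + 1)) :=
      (measurable_const.sub ((measurable_deriv _).comp (measurable_id.add measurable_const)))
    have : (fun s : ℝ ↦ (Real.log x - psi (s + 1)) * (x ^ s / Real.Gamma (s + 1)))
        =ᵐ[volume.restrict (Ioi 0)]
        fun s ↦ (Real.log x - deriv (Real.log ∘ Real.Gamma) (s + 1)) * (x ^ s / Real.Gamma (s + 1)) := by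
      filter_upwards [ae_restrict_mem measurableSet_Ioi] with s hs
      rw [deriv_logGamma (by linarith [mem_Ioi.mp hs] : (0:ℝ) < s + 1)]
    exact (AEStronglyMeasurable.mul (hmd.aestronglyMeasurable) hmW).congr this.symm
  · filter_upwards [ae_restrict_mem measurableSet_Ioi] with s hs
    have hs0 : (0:ℝ) < s := hs
    have hG : 0 < Real.Gamma (s + 1) := gamma_add_one_pos hs0.le
    have hWpos : (0:ℝ) ≤ x ^ s / Real.Gamma (s + 1) := by positivity
    have hpsi : psi (s + 1) = Hfun s - γ := psi_eq_Hfun hs0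
    have hH0 : 0 ≤ Hfun s := Hfun_nonneg hs0.le
    have hH1 : Hfun s ≤ 1 + s := Hfun_le hs0.le
    have habs : |Real.log x - psi (s + 1)| ≤ |Real.log x| + |γ| + (1 + s) := by
      rw [hpsi]
      have h1 : |Real.log x - (Hfun s - γ)| ≤ |Real.log x| + |Hfun s - γ| := abs_sub _ _
      have h2 : |Hfun s - γ| ≤ |Hfun s| + |γ| := abs_sub _ _
      have h3 : |Hfun s| ≤ 1 + s := by rw [abs_of_nonneg hH0]; exact hH1
      linarith
    rw [Real.norm_eq_abs, Real.norm_eq_abs, abs_mul,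
      abs_of_nonneg hWpos]
    have hKs : |Real.log x| + |γ| + (1 + s) ≤ K * (1 + s) := by
      have h1s : (1:ℝ) ≤ 1 + s := by linarith
      have := abs_nonneg (Real.log x)
      have := abs_nonneg γ
      nlinarith
    have hRHS : |K * ((1 + s) * (x ^ s / Real.Gamma (s + 1)))|
        = K * ((1 + s) * (x ^ s / Real.Gamma (s + 1))) := by
      apply abs_of_nonneg
      have hK0 : (0:ℝ) ≤ K := by positivity
      have h1s : (0:ℝ) ≤ 1 + s := by linarith
      exact mul_nonneg hK0 (mul_nonneg h1s hWpos)
    rw [hRHS]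
    have := mul_le_mul_of_nonneg_right (habs.trans hKs) hWpos
    calc |Real.log x - psi (s + 1)| * (x ^ s / Real.Gamma (s + 1))
        ≤ K * (1 + s) * (x ^ s / Real.Gamma (s + 1)) := this
      _ = K * ((1 + s) * (x ^ s / Real.Gamma (s + 1))) := by ring

lemma ftc_key (hx : 0 < x) :
    ∫ s in Ioi (0:ℝ), (Real.log x - psi (s + 1)) * (x ^ s / Real.Gamma (s + 1)) = -1 := by
  have h := integral_Ioi_of_hasDerivAt_of_tendsto'
    (f := fun t : ℝ ↦ x ^ t / Real.Gamma (t + 1))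
    (fun s hs ↦ hasDerivAt_W hx hs) (integrable_W' hx) (tend0 hx)
  rw [h]
  simp [Real.rpow_zero, Real.Gamma_one]

lemma integrable_HW {x : ℝ} (hx : 0 < x) :
    IntegrableOn (fun s : ℝ ↦ Hfun s * (x ^ s / Real.Gamma (s + 1))) (Ioi 0) := by
  set γ := Real.eulerMascheroniConstant
  have h := (((integrable_base hx).const_mul (Real.log x + γ)).sub (integrable_W' hx))
  apply h.congr
  filter_upwards [ae_restrict_mem measurableSet_Ioi] with s hs
  have hpsi : psi (s + 1) = Hfun s - γ := psi_eq_Hfun hs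
  simp only [Pi.sub_apply, hpsi]
  ring

lemma integral_HW {x : ℝ} (hx : 0 < x) :
    ∫ s in Ioi (0:ℝ), Hfun s * (x ^ s / Real.Gamma (s + 1))
      = (Real.log x + Real.eulerMascheroniConstant) * volterra x + 1 := by
  set γ := Real.eulerMascheroniConstant
  have hcongr : ∀ s ∈ Ioi (0:ℝ), Hfun s * (x ^ s / Real.Gamma (s + 1))
      = (Real.log x + γ) * (x ^ s / Real.Gamma (s + 1))
        - (Real.log x - psi (s + 1)) * (x ^ s / Real.Gamma (s + 1)) := by
    intro s hs
    have hpsi : psi (s + 1) = Hfun s - γ := psi_eq_Hfun hs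
    rw [hpsi]; ring
  rw [setIntegral_congr_fun measurableSet_Ioi hcongr,
    integral_sub ((integrable_base hx).const_mul _) (integrable_W' hx),
    ftc_key hx, integral_const_mul]
  rw [volterra]
  ring

-- the inner θ-integral equals Hfun
lemma theta_integral {s : ℝ} (hs : 0 ≤ s) :
    ∫ θ in Ioo (0:ℝ) 1, (1 - (1 - θ) ^ s) / θ = Hfun s := by
  have heq : (fun θ : ℝ ↦ (1 - (1 - θ) ^ s) / θ)
      = fun θ : ℝ ↦ (1 - (1 - θ) ^ s) / (1 - (1 - θ)) := by
    funext θ; rw [sub_sub_cancel]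
  rw [heq, Hfun]
  rw [← integral_Ioc_eq_integral_Ioo, ← intervalIntegral.integral_of_le one_pos.le,
    ← integral_Ioc_eq_integral_Ioo, ← intervalIntegral.integral_of_le one_pos.le]
  have := intervalIntegral.integral_comp_sub_left (a := 0) (b := 1)
    (fun u : ℝ ↦ (1 - u ^ s) / (1 - u)) 1
  simp only [sub_zero, sub_self] at this
  rw [this]

lemma pointwise_theta {x θ : ℝ} (hx : 0 < x) (hθ : θ ∈ Ioo (0:ℝ) 1) :
    ∫ s in Ioi (0:ℝ), ((1 - (1 - θ) ^ s) / θ) * (x ^ s / Real.Gamma (s + 1))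
      = (volterra x - volterra ((1 - θ) * x)) / θ := by
  have hθ0 := hθ.1
  have h1θ : 0 < 1 - θ := by linarith [hθ.2]
  have hi1 := integrable_base hx
  have hi2 := integrable_base (mul_pos h1θ hx)
  have hi2' : IntegrableOn (fun s : ℝ ↦ (1 - θ) ^ s * (x ^ s / Real.Gamma (s + 1))) (Ioi 0) := by
    apply hi2.congr_fun ?_ measurableSet_Ioi
    intro s _
    simp only [Real.mul_rpow h1θ.le hx.le]
    ring
  have key : ∀ s ∈ Ioi (0:ℝ), ((1 - (1 - θ) ^ s) / θ) * (x ^ s / Real.Gamma (s + 1))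
      = (1/θ) * ((x ^ s / Real.Gamma (s + 1)) - (1 - θ) ^ s * (x ^ s / Real.Gamma (s + 1))) := by
    intro s hsmem
    have hG : Real.Gamma (s + 1) ≠ 0 := (gamma_add_one_pos (le_of_lt hsmem)).ne'
    field_simp
  rw [setIntegral_congr_fun measurableSet_Ioi key, integral_const_mul,
    integral_sub hi1 hi2']
  have : ∫ s in Ioi (0:ℝ), (1 - θ) ^ s * (x ^ s / Real.Gamma (s + 1))
      = volterra ((1 - θ) * x) := by
    rw [volterra]
    apply setIntegral_congr_fun measurableSet_Ioi
    intro s _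
    simp only [Real.mul_rpow h1θ.le hx.le]
    ring
  rw [this]
  have hvx : volterra x = ∫ a in Ioi (0:ℝ), x ^ a / Real.Gamma (a + 1) := rfl
  rw [hvx]
  ring

-- product integrability
lemma prod_integrable {x : ℝ} (hx : 0 < x) :
    Integrable (fun p : ℝ × ℝ ↦ ((1 - (1 - p.2) ^ p.1) / p.2) * (x ^ p.1 / Real.Gamma (p.1 + 1)))
      ((volume.restrict (Ioi 0)).prod (volume.restrict (Ioo 0 1))) := by
  have hmeas : AEStronglyMeasurable
      (fun p : ℝ × ℝ ↦ ((1 - (1 - p.2) ^ p.1) / p.2) * (x ^ p.1 / Real.Gamma (p.1 + 1)))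
      ((volume.restrict (Ioi 0)).prod (volume.restrict (Ioo 0 1))) := by
    rw [Measure.prod_restrict]
    apply ContinuousOn.aestronglyMeasurable ?_ (measurableSet_Ioi.prod measurableSet_Ioo)
    apply ContinuousOn.mul
    · apply ContinuousOn.div
      · apply ContinuousOn.sub continuousOn_const
        intro p hp
        have h1 : (1 : ℝ) - p.2 ≠ 0 := by
          have := hp.2.2
          have : p.2 < 1 := hp.2.2
          intro h; rw [sub_eq_zero] at h; exact absurd h.symm (ne_of_lt this)
        have hc : ContinuousAt (fun q : ℝ × ℝ ↦ (1 - q.2) ^ q.1) p := by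
          have hc2 : ContinuousAt (fun q : ℝ × ℝ ↦ ((1 - q.2), q.1)) p := by fun_prop
          exact (Real.continuousAt_rpow _ (Or.inl h1)).comp hc2
        exact hc.continuousWithinAt
      · fun_prop
      · intro p hp; exact (hp.2.1).ne'
    · apply ContinuousOn.div
      · intro p hp
        have : ContinuousAt (fun q : ℝ × ℝ ↦ x ^ q.1) p := by
          have : ContinuousAt (fun q : ℝ × ℝ ↦ Real.exp (Real.log x * q.1)) p := by fun_prop
          apply this.congr
          filter_upwards with q
          rw [Real.rpow_def_of_pos hx]
        exact this.continuousWithinAt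
      · intro p hp
        have hp1 : (0:ℝ) < p.1 := hp.1
        have hne : ∀ m : ℕ, p.1 + 1 ≠ -(m:ℝ) := Gamma_ne_neg_nat (by linarith)
        have hc : ContinuousAt (fun q : ℝ × ℝ ↦ Real.Gamma (q.1 + 1)) p := by
          apply ContinuousAt.comp (f := fun q : ℝ × ℝ ↦ q.1 + 1) (g := Real.Gamma)
            ((Real.differentiableAt_Gamma hne).continuousAt)
          fun_prop
        exact hc.continuousWithinAt
      · intro p hp
        exact (gamma_add_one_pos (le_of_lt hp.1)).ne'
  rw [integrable_prod_iff hmeas]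
  constructor
  · filter_upwards [ae_restrict_mem measurableSet_Ioi] with s hs
    have hs0 : (0:ℝ) < s := hs
    have hG := gamma_add_one_pos hs0.le
    apply integrableOn_of_bounded' measurableSet_Ioo (by simp) ?_
      (M := (1 + s) * (x ^ s / Real.Gamma (s + 1)))
    · intro θ hθ
      have hub := H_integrand_bounds hs0.le (u := 1 - θ)
        (by constructor <;> [linarith [hθ.2]; linarith [hθ.1]])
      rw [sub_sub_cancel] at hub
      have hW : (0:ℝ) ≤ x ^ s / Real.Gamma (s + 1) := by positivity
      rw [Real.norm_eq_abs, abs_mul, abs_of_nonneg hub.1, abs_of_nonneg hW]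
      exact mul_le_mul_of_nonneg_right hub.2 hW
    · apply ContinuousOn.aestronglyMeasurable ?_ measurableSet_Ioo
      apply ContinuousOn.mul ?_ continuousOn_const
      apply ContinuousOn.div ?_ (by fun_prop) (fun θ hθ ↦ (hθ.1).ne')
      apply ContinuousOn.sub continuousOn_const
      intro θ hθ
      apply ContinuousAt.continuousWithinAt
      apply ContinuousAt.rpow_const (by fun_prop)
      left
      have : θ < 1 := hθ.2
      intro h; rw [sub_eq_zero] at h; exact absurd h.symm (ne_of_lt this)
  · -- integral of norms
    have hcongr : ∀ s ∈ Ioi (0:ℝ),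
        (∫ θ in Ioo (0:ℝ) 1, ‖((1 - (1 - θ) ^ s) / θ) * (x ^ s / Real.Gamma (s + 1))‖)
        = Hfun s * (x ^ s / Real.Gamma (s + 1)) := by
      intro s hs
      have hs0 : (0:ℝ) < s := hs
      have hW : (0:ℝ) ≤ x ^ s / Real.Gamma (s + 1) := by
        have := gamma_add_one_pos hs0.le; positivity
      have : ∀ θ ∈ Ioo (0:ℝ) 1, ‖((1 - (1 - θ) ^ s) / θ) * (x ^ s / Real.Gamma (s + 1))‖
          = ((1 - (1 - θ) ^ s) / θ) * (x ^ s / Real.Gamma (s + 1)) := by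
        intro θ hθ
        have hub := H_integrand_bounds hs0.le (u := 1 - θ)
          (by constructor <;> [linarith [hθ.2]; linarith [hθ.1]])
        rw [sub_sub_cancel] at hub
        rw [Real.norm_eq_abs, abs_of_nonneg (mul_nonneg hub.1 hW)]
      rw [setIntegral_congr_fun measurableSet_Ioo this, integral_mul_const,
        theta_integral hs0.le]
    apply IntegrableOn.congr_fun (integrable_HW hx) (fun s hs ↦ (hcongr s hs).symm)
      measurableSet_Ioi

lemma I_integrable {x : ℝ} (hx : 0 < x) :
    IntegrableOn (fun θ : ℝ ↦ (volterra x - volterra ((1 - θ) * x)) / θ) (Ioo 0 1) := by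
  have h := (prod_integrable hx).integral_prod_right
  apply h.congr
  filter_upwards [ae_restrict_mem measurableSet_Ioo] with θ hθ
  exact pointwise_theta hx hθ

lemma I_eval {x : ℝ} (hx : 0 < x) :
    ∫ θ in Ioo (0:ℝ) 1, (volterra x - volterra ((1 - θ) * x)) / θ
      = (Real.log x + Real.eulerMascheroniConstant) * volterra x + 1 := by
  have hswap := MeasureTheory.integral_integral_swap
    (μ := volume.restrict (Ioi 0)) (ν := volume.restrict (Ioo 0 1))
    (f := fun s θ ↦ ((1 - (1 - θ) ^ s) / θ) * (x ^ s / Real.Gamma (s + 1)))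
    (prod_integrable hx)
  have hL : ∀ s ∈ Ioi (0:ℝ),
      (∫ θ in Ioo (0:ℝ) 1, ((1 - (1 - θ) ^ s) / θ) * (x ^ s / Real.Gamma (s + 1)))
        = Hfun s * (x ^ s / Real.Gamma (s + 1)) := by
    intro s hs
    rw [integral_mul_const, theta_integral (le_of_lt hs), mul_comm]
  have hR : ∀ θ ∈ Ioo (0:ℝ) 1,
      (∫ s in Ioi (0:ℝ), ((1 - (1 - θ) ^ s) / θ) * (x ^ s / Real.Gamma (s + 1)))
        = (volterra x - volterra ((1 - θ) * x)) / θ := fun θ hθ ↦ pointwise_theta hx hθ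
  rw [setIntegral_congr_fun measurableSet_Ioi hL] at hswap
  rw [setIntegral_congr_fun measurableSet_Ioo hR] at hswap
  rw [← hswap, integral_HW hx]

/-- For all `β, β′ > 0`:
`∫₀^1 (ν((1−θ)β′) ν(β) − ν(β′) ν((1−θ)β)) / θ dθ = log(β/β′) ν(β′) ν(β) + ν(β′) − ν(β)`. -/
theorem volterra_integral_identity (β β' : ℝ) (hβ : 0 < β) (hβ' : 0 < β') :
    (∫ θ in (0 : ℝ)..1,
        (volterra ((1 - θ) * β') * volterra β - volterra β' * volterra ((1 - θ) * β)) * (1 / θ))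
      = Real.log (β / β') * volterra β' * volterra β + volterra β' - volterra β := by
  have h1 : (∫ θ in (0 : ℝ)..1,
      (volterra ((1 - θ) * β') * volterra β - volterra β' * volterra ((1 - θ) * β)) * (1 / θ))
      = ∫ θ in Ioo (0:ℝ) 1,
      (volterra ((1 - θ) * β') * volterra β - volterra β' * volterra ((1 - θ) * β)) * (1 / θ) := by
    rw [intervalIntegral.integral_of_le zero_le_one, integral_Ioc_eq_integral_Ioo]
  rw [h1]
  have hsplit : ∀ θ ∈ Ioo (0:ℝ) 1,
      (volterra ((1 - θ) * β') * volterra β - volterra β' * volterra ((1 - θ) * β)) * (1 / θ)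
      = volterra β' * ((volterra β - volterra ((1 - θ) * β)) / θ)
        - volterra β * ((volterra β' - volterra ((1 - θ) * β')) / θ) := by
    intro θ hθ
    have hθ0 : θ ≠ 0 := (hθ.1).ne'
    field_simp
    ring
  rw [setIntegral_congr_fun measurableSet_Ioo hsplit,
    integral_sub ((I_integrable hβ).const_mul (volterra β'))
      ((I_integrable hβ').const_mul (volterra β)),
    integral_const_mul, integral_const_mul, I_eval hβ, I_eval hβ',
    Real.log_div hβ.ne' hβ'.ne']
  ring
end FTC
end

section
/- For all real α > 0 and β > 0, the function υ(α,β) := ∫₀^1 (e^{−α/s}/s) · (e^{−β/(1−s)}/(1−s)) ds satisfies υ(α,β) ≤ 2 e^{−β} E(α) + 2 e^{−α} E(β). -/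
open MeasureTheory Real

/-- The exponential integral `E(x) = ∫_x^∞ (e^{−y}/y) dy` for `x > 0`. -/
noncomputable def expInt (x : ℝ) : ℝ := ∫ y in Set.Ioi x, Real.exp (-y) / y

lemma expInt_nonneg {x : ℝ} (hx : 0 < x) : 0 ≤ expInt x := by
  apply MeasureTheory.setIntegral_nonneg measurableSet_Ioi
  intro y hy
  have hy0 : 0 < y := hx.trans hy
  positivity

lemma meas_aux : Measurable fun y : ℝ => Real.exp (-y) / y :=
  (Real.measurable_exp.comp measurable_neg).div measurable_id

lemma meas_aux2 (a : ℝ) : Measurable fun s : ℝ => Real.exp (-(a/s)) / s :=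
  (Real.measurable_exp.comp ((measurable_const.div measurable_id).neg)).div measurable_id

lemma expInt_integrable {a : ℝ} (ha : 0 < a) :
    MeasureTheory.IntegrableOn (fun y => Real.exp (-y) / y) (Set.Ioi a) := by
  have h := (exp_neg_integrableOn_Ioi a (one_pos)).const_mul (1/a)
  refine (h.mono' meas_aux.aestronglyMeasurable ?_)
  filter_upwards [MeasureTheory.ae_restrict_mem measurableSet_Ioi] with y hy
  have hy' : a < y := hy
  have hy0 : 0 < y := ha.trans hy'
  rw [Real.norm_eq_abs, abs_of_nonneg (div_nonneg (Real.exp_nonneg _) hy0.le)]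
  calc Real.exp (-y) / y ≤ Real.exp (-y) / a :=
        div_le_div_of_nonneg_left (Real.exp_nonneg _) ha hy'.le
    _ = 1/a * Real.exp (-1 * y) := by rw [neg_one_mul]; ring

-- pointwise bound e^{-a/s}/s ≤ 1/a for s > 0
lemma pw_bound {a s : ℝ} (ha : 0 < a) (hs : 0 < s) :
    Real.exp (-(a/s)) / s ≤ 1 / a := by
  have h1 : a/s ≤ Real.exp (a/s) :=
    le_trans (by linarith [Real.add_one_le_exp (a/s)] : a/s ≤ a/s + 1) (Real.add_one_le_exp _)
  have h2 : a ≤ s * Real.exp (a/s) := (div_le_iff₀' hs).mp h1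
  rw [Real.exp_neg, div_le_div_iff₀ hs ha]
  nlinarith [Real.exp_pos (a/s), inv_pos.mpr (Real.exp_pos (a/s)),
    mul_inv_cancel₀ (ne_of_gt (Real.exp_pos (a/s)))]

lemma subst_eq {a : ℝ} (ha : 0 < a) :
    ∫ s in Set.Ioo (0:ℝ) (1/2), Real.exp (-(a/s)) / s
      = ∫ y in Set.Ioi (2*a), Real.exp (-y) / y := by
  have himg : (fun s : ℝ => a / s) '' Set.Ioo (0:ℝ) (1/2) = Set.Ioi (2*a) := by
    ext y
    simp only [Set.mem_image, Set.mem_Ioo, Set.mem_Ioi]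
    constructor
    · rintro ⟨s, ⟨hs0, hs1⟩, rfl⟩
      rw [lt_div_iff₀ hs0]
      nlinarith
    · intro hy
      have hy0 : 0 < y := by nlinarith
      refine ⟨a / y, ⟨by positivity, ?_⟩, ?_⟩
      · rw [div_lt_iff₀ hy0]; nlinarith
      · field_simp
  have hderiv : ∀ x ∈ Set.Ioo (0:ℝ) (1/2),
      HasDerivWithinAt (fun s : ℝ => a / s) (-(a / x^2)) (Set.Ioo (0:ℝ) (1/2)) x := by
    intro x hx
    have hx0 : x ≠ 0 := ne_of_gt hx.1
    have : HasDerivAt (fun s : ℝ => a / s) (-(a / x^2)) x := by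
      have h := (hasDerivAt_inv hx0).const_mul a
      simp only [div_eq_mul_inv]
      exact h.congr_deriv (by ring)
    exact this.hasDerivWithinAt
  have hinj : Set.InjOn (fun s : ℝ => a / s) (Set.Ioo (0:ℝ) (1/2)) := by
    intro x hx y hy h
    have hx0 : x ≠ 0 := ne_of_gt hx.1
    have hy0 : y ≠ 0 := ne_of_gt hy.1
    field_simp at h
    exact h.symm
  rw [← himg, MeasureTheory.integral_image_eq_integral_abs_deriv_smul measurableSet_Ioo
    hderiv hinj (fun y => Real.exp (-y) / y)]
  apply MeasureTheory.setIntegral_congr_fun measurableSet_Ioo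
  intro x hx
  have hx0 : 0 < x := hx.1
  simp only [smul_eq_mul, abs_neg, abs_of_nonneg (le_of_lt (div_pos ha (pow_pos hx0 2)))]
  field_simp

lemma g_intble {a : ℝ} (ha : 0 < a) :
    IntervalIntegrable (fun s => Real.exp (-(a/s)) / s) MeasureTheory.volume 0 (1/2) := by
  rw [intervalIntegrable_iff_integrableOn_Ioc_of_le (by norm_num)]
  have hc : MeasureTheory.IntegrableOn (fun _ : ℝ => 1/a) (Set.Ioc (0:ℝ) (1/2)) :=
    MeasureTheory.integrableOn_const measure_Ioc_lt_top.ne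
  refine hc.mono' (meas_aux2 a).aestronglyMeasurable ?_
  filter_upwards [MeasureTheory.ae_restrict_mem measurableSet_Ioc] with s hs
  rw [Real.norm_eq_abs, abs_of_nonneg (div_nonneg (Real.exp_nonneg _) hs.1.le)]
  exact pw_bound ha hs.1

lemma key_half {a : ℝ} (ha : 0 < a) :
    ∫ s in (0:ℝ)..(1/2), Real.exp (-(a/s)) / s ≤ expInt a := by
  rw [intervalIntegral.integral_of_le (by norm_num),
    MeasureTheory.integral_Ioc_eq_integral_Ioo, subst_eq ha]
  unfold expInt
  apply MeasureTheory.setIntegral_mono_set (expInt_integrable ha)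
  · filter_upwards [MeasureTheory.ae_restrict_mem measurableSet_Ioi] with y hy
    have hy0 : 0 < y := ha.trans hy
    positivity
  · apply HasSubset.Subset.eventuallyLE
    apply Set.Ioi_subset_Ioi
    linarith

/-- For all `α, β > 0`, the function
`υ(α,β) = ∫₀^1 (e^{−α/s}/s)(e^{−β/(1−s)}/(1−s)) ds` satisfies
`υ(α,β) ≤ 2 e^{−β} E(α) + 2 e^{−α} E(β)`. -/
theorem upsilon_upper_bound (α β : ℝ) (hα : 0 < α) (hβ : 0 < β) :
    (∫ s in (0 : ℝ)..1, (Real.exp (-(α / s)) / s) * (Real.exp (-(β / (1 - s))) / (1 - s)))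
      ≤ 2 * Real.exp (-β) * expInt α + 2 * Real.exp (-α) * expInt β := by
  set f : ℝ → ℝ := fun s => (Real.exp (-(α / s)) / s) * (Real.exp (-(β / (1 - s))) / (1 - s))
    with hf
  by_cases hint : IntervalIntegrable f MeasureTheory.volume 0 1
  · have hsub1 : Set.uIcc (0:ℝ) (1/2) ⊆ Set.uIcc (0:ℝ) 1 := by
      rw [Set.uIcc_of_le (by norm_num : (0:ℝ) ≤ 1/2), Set.uIcc_of_le (by norm_num : (0:ℝ) ≤ 1)]
      exact Set.Icc_subset_Icc le_rfl (by norm_num)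
    have hsub2 : Set.uIcc (1/2:ℝ) 1 ⊆ Set.uIcc (0:ℝ) 1 := by
      rw [Set.uIcc_of_le (by norm_num : (1/2:ℝ) ≤ 1), Set.uIcc_of_le (by norm_num : (0:ℝ) ≤ 1)]
      exact Set.Icc_subset_Icc (by norm_num) le_rfl
    have h1 : IntervalIntegrable f MeasureTheory.volume 0 (1/2) := hint.mono_set hsub1
    have h2 : IntervalIntegrable f MeasureTheory.volume (1/2) 1 := hint.mono_set hsub2
    rw [← intervalIntegral.integral_add_adjacent_intervals h1 h2]
    have key1 : ∫ s in (0:ℝ)..(1/2), f s ≤ 2 * Real.exp (-β) * expInt α := by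
      have hb : ∫ s in (0:ℝ)..(1/2), f s
          ≤ ∫ s in (0:ℝ)..(1/2), 2 * Real.exp (-β) * (Real.exp (-(α/s)) / s) := by
        apply intervalIntegral.integral_mono_on (by norm_num) h1
          (((g_intble hα).const_mul _))
        intro s hs
        rcases eq_or_lt_of_le hs.1 with h0 | h0
        · simp [hf, ← h0]
        · have hs1 : s ≤ 1/2 := hs.2
          have h1s : (0:ℝ) < 1 - s := by linarith
          have e1 : Real.exp (-(β / (1 - s))) ≤ Real.exp (-β) := by
            apply Real.exp_le_exp.mpr
            rw [neg_le_neg_iff, le_div_iff₀ h1s]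
            nlinarith
          have e2 : 1 / (1 - s) ≤ 2 := by
            rw [div_le_iff₀ h1s]; linarith
          have hgs : 0 ≤ Real.exp (-(α/s)) / s := div_nonneg (Real.exp_nonneg _) h0.le
          simp only [hf]
          calc Real.exp (-(α / s)) / s * (Real.exp (-(β / (1 - s))) / (1 - s))
              ≤ Real.exp (-(α / s)) / s * (Real.exp (-β) * 2) := by
                apply mul_le_mul_of_nonneg_left _ hgs
                rw [div_eq_mul_one_div]
                exact mul_le_mul e1 e2 (by positivity) (Real.exp_nonneg _)
            _ = 2 * Real.exp (-β) * (Real.exp (-(α/s)) / s) := by ring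
      calc ∫ s in (0:ℝ)..(1/2), f s
          ≤ ∫ s in (0:ℝ)..(1/2), 2 * Real.exp (-β) * (Real.exp (-(α/s)) / s) := hb
        _ = 2 * Real.exp (-β) * ∫ s in (0:ℝ)..(1/2), Real.exp (-(α/s)) / s := by
            rw [intervalIntegral.integral_const_mul]
        _ ≤ 2 * Real.exp (-β) * expInt α :=
            mul_le_mul_of_nonneg_left (key_half hα) (by positivity)
    have key2 : ∫ s in (1/2:ℝ)..1, f s ≤ 2 * Real.exp (-α) * expInt β := by
      have hflip : ∫ s in (1/2:ℝ)..1, f s = ∫ t in (0:ℝ)..(1/2), f (1 - t) := by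
        rw [intervalIntegral.integral_comp_sub_left f 1]
        norm_num
      rw [hflip]
      have h2' : IntervalIntegrable (fun t => f (1 - t)) MeasureTheory.volume 0 (1/2) := by
        have h := h2.symm.comp_sub_left 1
        norm_num at h
        exact h
      have hb : ∫ t in (0:ℝ)..(1/2), f (1 - t)
          ≤ ∫ t in (0:ℝ)..(1/2), 2 * Real.exp (-α) * (Real.exp (-(β/t)) / t) := by
        apply intervalIntegral.integral_mono_on (by norm_num) h2'
          (((g_intble hβ).const_mul _))
        intro t ht
        rcases eq_or_lt_of_le ht.1 with h0 | h0
        · norm_num [hf, ← h0]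
        · have ht1 : t ≤ 1/2 := ht.2
          have h1t : (0:ℝ) < 1 - t := by linarith
          have e1 : Real.exp (-(α / (1 - t))) ≤ Real.exp (-α) := by
            apply Real.exp_le_exp.mpr
            rw [neg_le_neg_iff, le_div_iff₀ h1t]
            nlinarith
          have e2 : 1 / (1 - t) ≤ 2 := by
            rw [div_le_iff₀ h1t]; linarith
          have hgs : 0 ≤ Real.exp (-(β/t)) / t := div_nonneg (Real.exp_nonneg _) h0.le
          simp only [hf, sub_sub_cancel]
          calc Real.exp (-(α / (1 - t))) / (1 - t) * (Real.exp (-(β / t)) / t)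
              ≤ (Real.exp (-α) * 2) * (Real.exp (-(β / t)) / t) := by
                apply mul_le_mul_of_nonneg_right _ hgs
                rw [div_eq_mul_one_div]
                exact mul_le_mul e1 e2 (by positivity) (Real.exp_nonneg _)
            _ = 2 * Real.exp (-α) * (Real.exp (-(β/t)) / t) := by ring
      calc ∫ t in (0:ℝ)..(1/2), f (1 - t)
          ≤ ∫ t in (0:ℝ)..(1/2), 2 * Real.exp (-α) * (Real.exp (-(β/t)) / t) := hb
        _ = 2 * Real.exp (-α) * ∫ t in (0:ℝ)..(1/2), Real.exp (-(β/t)) / t := by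
            rw [intervalIntegral.integral_const_mul]
        _ ≤ 2 * Real.exp (-α) * expInt β :=
            mul_le_mul_of_nonneg_left (key_half hβ) (by positivity)
    linarith
  · rw [intervalIntegral.integral_undef hint]
    have e1 := expInt_nonneg hα
    have e2 := expInt_nonneg hβ
    have n1 : (0:ℝ) ≤ 2 * Real.exp (-β) * expInt α :=
      mul_nonneg (by positivity) e1
    have n2 : (0:ℝ) ≤ 2 * Real.exp (-α) * expInt β :=
      mul_nonneg (by positivity) e2
    linarith
end
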